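/- Let S_B and A_A, A_B be the symmetric and antisymmetric projectors as above, and for a unit vector ψ_{AB} ∈ ℂ^{d_A} ⊗ ℂ^{d_B} define the reduced toy-model state ω_A = Tr_B(S_B |ψ_{AB}⟩⟨ψ_{AB}|^{⊗2}) + (S_A/Tr S_A)·Tr(A_A ⊗ A_B |ψ_{AB}⟩⟨ψ_{AB}|^{⊗2}). Then Tr(ω_A) = 1 and ω_A is positive semidefinite. -/

import Mathlib

open Matrix BigOperators
open scoped Kronecker ComplexConjugate

noncomputable section

def swapMat (I : Type*) [DecidableEq I] [Fintype I] : Matrix (I × I) (I × I) ℂ :=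
  fun p q => if p.1 = q.2 ∧ p.2 = q.1 then 1 else 0

def symProj (I : Type*) [DecidableEq I] [Fintype I] : Matrix (I × I) (I × I) ℂ :=
  (2⁻¹ : ℂ) • (1 + swapMat I)

def asymProj (I : Type*) [DecidableEq I] [Fintype I] : Matrix (I × I) (I × I) ℂ :=
  (2⁻¹ : ℂ) • (1 - swapMat I)

/-- reordering (1,2,3,4) ↦ (1,3,2,4) of tensor factors -/
def reorder (A B : Type*) : ((A × B) × (A × B)) ≃ ((A × A) × (B × B)) where
  toFun x := ((x.1.1, x.2.1), (x.1.2, x.2.2))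
  invFun y := ((y.1.1, y.2.1), (y.1.2, y.2.2))
  left_inv x := rfl
  right_inv y := rfl

/-- |ψ⟩⟨ψ| -/
def outer {I : Type*} (ψ : I → ℂ) : Matrix I I ℂ := fun i j => ψ i * conj (ψ j)

/-- ψ ⊗ ψ -/
def vec2 {I : Type*} (ψ : I → ℂ) : I × I → ℂ := fun p => ψ p.1 * ψ p.2

/-- |ψ⟩⟨ψ|^{⊗2} -/
def pure2 {I : Type*} (ψ : I → ℂ) : Matrix (I × I) (I × I) ℂ := outer (vec2 ψ)

def unitVec {I : Type*} [Fintype I] (ψ : I → ℂ) : Prop := ∑ i, Complex.normSq (ψ i) = 1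

/-- partial trace over the second factor -/
def ptraceB {A B : Type*} [Fintype B] (M : Matrix (A × B) (A × B) ℂ) : Matrix A A ℂ :=
  fun a a' => ∑ b, M (a, b) (a', b)

/-- reindex an operator on (ℂ^A ⊗ ℂ^B)^{⊗2} as an operator on (ℂ^A)^{⊗2} ⊗ (ℂ^B)^{⊗2} -/
def reindexAB {A B : Type*} (M : Matrix ((A × B) × (A × B)) ((A × B) × (A × B)) ℂ) :
    Matrix ((A × A) × (B × B)) ((A × A) × (B × B)) ℂ :=
  M.submatrix (reorder A B).symm (reorder A B).symm

/-- the toy-model reduced state of a pure bipartite state -/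
def toyReduced {dA dB : ℕ} (ψ : Fin dA × Fin dB → ℂ) :
    Matrix (Fin dA × Fin dA) (Fin dA × Fin dA) ℂ :=
  ptraceB (((1 : Matrix (Fin dA × Fin dA) (Fin dA × Fin dA) ℂ) ⊗ₖ symProj (Fin dB)) *
      reindexAB (pure2 ψ)) +
    (((asymProj (Fin dA) ⊗ₖ asymProj (Fin dB)) * reindexAB (pure2 ψ)).trace /
        (symProj (Fin dA)).trace) • symProj (Fin dA)


section Aux
open scoped ComplexOrder

variable {I : Type*} [DecidableEq I] [Fintype I]

lemma swapMat_apply' (p q : I × I) : swapMat I p q = if p = (q.2, q.1) then 1 else 0 := by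
  simp [swapMat, Prod.ext_iff]

lemma swap_mul_swap : swapMat I * swapMat I = 1 := by
  ext p q
  simp only [Matrix.mul_apply]
  rw [Finset.sum_eq_single (q.2, q.1)]
  · simp [swapMat_apply', Matrix.one_apply, Prod.ext_iff]
  · intro x _ hx
    simp [swapMat_apply' x q, hx]
  · simp

lemma swap_conjTranspose : (swapMat I)ᴴ = swapMat I := by
  ext p q
  simp only [conjTranspose_apply, swapMat, apply_ite (star : ℂ → ℂ), star_one, star_zero]
  refine if_congr ?_ rfl rfl
  constructor <;> rintro ⟨h1, h2⟩ <;> exact ⟨h2.symm, h1.symm⟩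

lemma symProj_conjTranspose : (symProj I)ᴴ = symProj I := by
  simp [symProj, conjTranspose_smul, conjTranspose_add, swap_conjTranspose, Complex.star_def]

lemma symProj_mul_symProj : symProj I * symProj I = symProj I := by
  simp only [symProj, Matrix.smul_mul, Matrix.mul_smul, add_mul, mul_add, one_mul, mul_one,
    swap_mul_swap]
  rw [add_comm (swapMat I) 1]
  module

open scoped ComplexOrder in
lemma symProj_posSemidef : (symProj I).PosSemidef := by
  have h : symProj I = (symProj I)ᴴ * symProj I := by
    rw [symProj_conjTranspose, symProj_mul_symProj]
  rw [h]
  exact Matrix.posSemidef_conjTranspose_mul_self _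


lemma gram_posSemidef {n m : Type*} [Fintype n] [Fintype m] (v : n → m → ℂ) :
    (Matrix.of fun i j => ∑ b, v i b * conj (v j b)).PosSemidef := by
  refine posSemidef_iff_dotProduct_mulVec.mpr ⟨?_, ?_⟩
  · ext i j
    simp only [conjTranspose_apply, Matrix.of_apply, Complex.star_def, map_sum, _root_.map_mul,
      Complex.conj_conj]
    exact Finset.sum_congr rfl fun b _ => mul_comm _ _
  · intro x
    have key : dotProduct (star x) ((Matrix.of fun i j => ∑ b, v i b * conj (v j b)) *ᵥ x)
        = ∑ b, (∑ i, conj (x i) * v i b) * conj (∑ i, conj (x i) * v i b) := by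
      calc dotProduct (star x) ((Matrix.of fun i j => ∑ b, v i b * conj (v j b)) *ᵥ x)
          = ∑ i, ∑ j, ∑ b, (conj (x i) * v i b) * (x j * conj (v j b)) := by
            simp only [dotProduct, mulVec, Matrix.of_apply, Pi.star_apply, Complex.star_def,
              Finset.mul_sum, Finset.sum_mul]
            refine Finset.sum_congr rfl fun i _ => Finset.sum_congr rfl fun j _ =>
              Finset.sum_congr rfl fun b _ => by ring
        _ = ∑ b, ∑ i, ∑ j, (conj (x i) * v i b) * (x j * conj (v j b)) := by
            rw [show (∑ i : n, ∑ j : n, ∑ b : m, (conj (x i) * v i b) * (x j * conj (v j b)))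
                = ∑ i : n, ∑ b : m, ∑ j : n, (conj (x i) * v i b) * (x j * conj (v j b)) from
              Finset.sum_congr rfl fun i _ => Finset.sum_comm]
            exact Finset.sum_comm
        _ = ∑ b, (∑ i, conj (x i) * v i b) * conj (∑ i, conj (x i) * v i b) := by
            refine Finset.sum_congr rfl fun b _ => ?_
            simp only [map_sum, _root_.map_mul, Complex.conj_conj]
            rw [Finset.sum_mul_sum]
    rw [key]
    refine Finset.sum_nonneg fun b _ => ?_
    rw [Complex.mul_conj]
    exact_mod_cast Complex.zero_le_real.mpr (Complex.normSq_nonneg _)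

lemma real_smul_posSemidef {n : Type*} [Fintype n] {M : Matrix n n ℂ} (hM : M.PosSemidef)
    {r : ℝ} (hr : 0 ≤ r) : ((r : ℂ) • M).PosSemidef := by
  refine posSemidef_iff_dotProduct_mulVec.mpr ⟨?_, ?_⟩
  · rw [IsHermitian, conjTranspose_smul, hM.1]
    congr 1
    simp [Complex.star_def]
  · intro x
    rw [smul_mulVec, dotProduct_smul, smul_eq_mul]
    exact mul_nonneg (by exact_mod_cast Complex.zero_le_real.mpr hr) (hM.dotProduct_mulVec_nonneg x)


end Aux

section Aux2

-- my defs
def phi {dA dB : ℕ} (ψ : Fin dA × Fin dB → ℂ) (x : Fin dA × Fin dA) (b : Fin dB × Fin dB) : ℂ :=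
  ψ (x.1, b.1) * ψ (x.2, b.2)
def phiS {dA dB : ℕ} (ψ : Fin dA × Fin dB → ℂ) (x : Fin dA × Fin dA) (b : Fin dB × Fin dB) : ℂ :=
  (phi ψ x b + phi ψ x (b.2, b.1)) / 2
def phiA {dA dB : ℕ} (ψ : Fin dA × Fin dB → ℂ) (x : Fin dA × Fin dA) (b : Fin dB × Fin dB) : ℂ :=
  (phi ψ x b - phi ψ x (b.2, b.1)) / 2

lemma reindexAB_pure2_apply {dA dB : ℕ} (ψ : Fin dA × Fin dB → ℂ)
    (x y : Fin dA × Fin dA) (b c : Fin dB × Fin dB) :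
    reindexAB (pure2 ψ) (x, b) (y, c) = phi ψ x b * conj (phi ψ y c) := rfl

variable {dA dB : ℕ}

lemma phi_swap_swap (ψ : Fin dA × Fin dB → ℂ) (x : Fin dA × Fin dA) (b : Fin dB × Fin dB) :
    phi ψ (x.2, x.1) (b.2, b.1) = phi ψ x b := by
  simp [phi]; ring

lemma phi_swap_left (ψ : Fin dA × Fin dB → ℂ) (x : Fin dA × Fin dA) (b : Fin dB × Fin dB) :
    phi ψ (x.2, x.1) b = phi ψ x (b.2, b.1) := by
  simp [phi]; ring

lemma phiS_swap (ψ : Fin dA × Fin dB → ℂ) (x : Fin dA × Fin dA) (b : Fin dB × Fin dB) :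
    phiS ψ x (b.2, b.1) = phiS ψ x b := by
  simp [phiS]; ring

lemma phiA_swap (ψ : Fin dA × Fin dB → ℂ) (x : Fin dA × Fin dA) (b : Fin dB × Fin dB) :
    phiA ψ x (b.2, b.1) = - phiA ψ x b := by
  simp [phiA]; ring

/-- reindexing by the swap on B×B -/
lemma sum_swap_reindex (f : Fin dB × Fin dB → ℂ) :
    ∑ b : Fin dB × Fin dB, f (b.2, b.1) = ∑ b, f b := by
  exact Fintype.sum_equiv (Equiv.prodComm (Fin dB) (Fin dB)) _ _ (fun b => rfl)

lemma sum_phiS_conj_phi (ψ : Fin dA × Fin dB → ℂ) (x y : Fin dA × Fin dA) :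
    ∑ b, phiS ψ x b * conj (phi ψ y b) = ∑ b, phiS ψ x b * conj (phiS ψ y b) := by
  have h1 : ∑ b : Fin dB × Fin dB, phiS ψ x b * conj (phi ψ y (b.2, b.1))
      = ∑ b, phiS ψ x b * conj (phi ψ y b) := by
    rw [← sum_swap_reindex (fun b => phiS ψ x b * conj (phi ψ y b))]
    refine Finset.sum_congr rfl fun b _ => ?_
    rw [phiS_swap]
  have h2 : ∀ b : Fin dB × Fin dB, phiS ψ x b * conj (phiS ψ y b) * 2
      = phiS ψ x b * conj (phi ψ y b) + phiS ψ x b * conj (phi ψ y (b.2, b.1)) := by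
    intro b
    simp only [phiS, map_add, map_div₀, map_ofNat]
    ring
  have key : (∑ b, phiS ψ x b * conj (phiS ψ y b)) * 2
      = (∑ b, phiS ψ x b * conj (phi ψ y b)) * 2 := by
    rw [Finset.sum_mul, Finset.sum_mul]
    calc ∑ b, phiS ψ x b * conj (phiS ψ y b) * 2
        = ∑ b : Fin dB × Fin dB,
            (phiS ψ x b * conj (phi ψ y b) + phiS ψ x b * conj (phi ψ y (b.2, b.1))) :=
          Finset.sum_congr rfl fun b _ => h2 b
      _ = (∑ b, phiS ψ x b * conj (phi ψ y b))
            + ∑ b : Fin dB × Fin dB, phiS ψ x b * conj (phi ψ y (b.2, b.1)) := by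
          rw [Finset.sum_add_distrib]
      _ = ∑ b, phiS ψ x b * conj (phi ψ y b) * 2 := by
          rw [h1, ← Finset.sum_add_distrib]
          exact Finset.sum_congr rfl fun b _ => by ring
  exact (mul_right_cancel₀ two_ne_zero key).symm

lemma sum_phiA_conj_phi (ψ : Fin dA × Fin dB → ℂ) (x y : Fin dA × Fin dA) :
    ∑ b, phiA ψ x b * conj (phi ψ y b) = ∑ b, phiA ψ x b * conj (phiA ψ y b) := by
  have h1 : ∑ b : Fin dB × Fin dB, phiA ψ x b * conj (phi ψ y (b.2, b.1))
      = - ∑ b, phiA ψ x b * conj (phi ψ y b) := by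
    rw [← sum_swap_reindex (fun b => phiA ψ x b * conj (phi ψ y b)), ← Finset.sum_neg_distrib]
    refine Finset.sum_congr rfl fun b _ => ?_
    rw [phiA_swap]
    ring
  have h2 : ∀ b : Fin dB × Fin dB, phiA ψ x b * conj (phiA ψ y b) * 2
      = phiA ψ x b * conj (phi ψ y b) - phiA ψ x b * conj (phi ψ y (b.2, b.1)) := by
    intro b
    simp only [phiA, map_sub, map_div₀, map_ofNat]
    ring
  have key : (∑ b, phiA ψ x b * conj (phiA ψ y b)) * 2
      = (∑ b, phiA ψ x b * conj (phi ψ y b)) * 2 := by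
    rw [Finset.sum_mul, Finset.sum_mul]
    calc ∑ b, phiA ψ x b * conj (phiA ψ y b) * 2
        = ∑ b : Fin dB × Fin dB,
            (phiA ψ x b * conj (phi ψ y b) - phiA ψ x b * conj (phi ψ y (b.2, b.1))) :=
          Finset.sum_congr rfl fun b _ => h2 b
      _ = (∑ b, phiA ψ x b * conj (phi ψ y b))
            - ∑ b : Fin dB × Fin dB, phiA ψ x b * conj (phi ψ y (b.2, b.1)) := by
          rw [Finset.sum_sub_distrib]
      _ = ∑ b, phiA ψ x b * conj (phi ψ y b) * 2 := by
          rw [h1, sub_neg_eq_add, ← Finset.sum_add_distrib]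
          exact Finset.sum_congr rfl fun b _ => by ring
  exact (mul_right_cancel₀ two_ne_zero key).symm

lemma asym_sum {I : Type*} [DecidableEq I] [Fintype I] (p : I × I) (g : I × I → ℂ) :
    ∑ q, asymProj I p q * g q = (g p - g (p.2, p.1)) / 2 := by
  have hcond : ∀ q : I × I, (p.1 = q.2 ∧ p.2 = q.1) ↔ q = (p.2, p.1) := by
    intro q
    constructor
    · rintro ⟨h1, h2⟩
      exact Prod.ext h2.symm h1.symm
    · rintro rfl
      exact ⟨rfl, rfl⟩
  calc ∑ q, asymProj I p q * g q
      = ∑ q, (2⁻¹ : ℂ) * ((if p = q then g q else 0) - (if q = (p.2, p.1) then g q else 0)) := by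
        refine Finset.sum_congr rfl fun q _ => ?_
        simp only [asymProj, Matrix.smul_apply, Matrix.sub_apply, Matrix.one_apply, swapMat,
          hcond, smul_eq_mul]
        split_ifs <;> ring
    _ = (2⁻¹ : ℂ) * ((∑ q, if p = q then g q else 0) - ∑ q, if q = (p.2, p.1) then g q else 0) := by
        rw [← Finset.mul_sum, Finset.sum_sub_distrib]
    _ = (g p - g (p.2, p.1)) / 2 := by
        simp only [Finset.sum_ite_eq, Finset.sum_ite_eq', Finset.mem_univ, if_true]
        ring

lemma asym_entry (ψ : Fin dA × Fin dB → ℂ) (x : Fin dA × Fin dA) (b : Fin dB × Fin dB) :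
    ((asymProj (Fin dA) ⊗ₖ asymProj (Fin dB)) * reindexAB (pure2 ψ)) (x, b) (x, b)
      = phiA ψ x b * conj (phi ψ x b) := by
  rw [Matrix.mul_apply, Fintype.sum_prod_type]
  have inner : ∀ x' : Fin dA × Fin dA,
      (∑ b', (asymProj (Fin dA) ⊗ₖ asymProj (Fin dB)) (x, b) (x', b')
        * reindexAB (pure2 ψ) (x', b') (x, b))
      = asymProj (Fin dA) x x' *
        ((phi ψ x' b * conj (phi ψ x b) - phi ψ x' (b.2, b.1) * conj (phi ψ x b)) / 2) := by
    intro x'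
    have hterm : ∀ b', (asymProj (Fin dA) ⊗ₖ asymProj (Fin dB)) (x, b) (x', b')
        * reindexAB (pure2 ψ) (x', b') (x, b)
        = asymProj (Fin dB) b b' * (phi ψ x' b' * conj (phi ψ x b)) * asymProj (Fin dA) x x' := by
      intro b'
      rw [Matrix.kroneckerMap_apply, reindexAB_pure2_apply]
      ring
    rw [Finset.sum_congr rfl fun b' _ => hterm b', ← Finset.sum_mul,
      asym_sum b (fun b' => phi ψ x' b' * conj (phi ψ x b))]
    ring
  rw [Finset.sum_congr rfl fun x' _ => inner x',
    asym_sum x (fun x' => (phi ψ x' b * conj (phi ψ x b)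
      - phi ψ x' (b.2, b.1) * conj (phi ψ x b)) / 2)]
  simp only [phi_swap_left, phi_swap_swap]
  simp only [phiA]
  ring

lemma asym_trace (ψ : Fin dA × Fin dB → ℂ) :
    ((asymProj (Fin dA) ⊗ₖ asymProj (Fin dB)) * reindexAB (pure2 ψ)).trace
      = ∑ x : Fin dA × Fin dA, ∑ b : Fin dB × Fin dB, phiA ψ x b * conj (phiA ψ x b) := by
  rw [Matrix.trace, Fintype.sum_prod_type]
  refine Finset.sum_congr rfl fun x _ => ?_
  calc ∑ b : Fin dB × Fin dB,
        Matrix.diag ((asymProj (Fin dA) ⊗ₖ asymProj (Fin dB)) * reindexAB (pure2 ψ)) (x, b)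
      = ∑ b, phiA ψ x b * conj (phi ψ x b) :=
        Finset.sum_congr rfl fun b _ => asym_entry ψ x b
    _ = ∑ b, phiA ψ x b * conj (phiA ψ x b) := sum_phiA_conj_phi ψ x x

lemma ptrace_eq (ψ : Fin dA × Fin dB → ℂ) :
    ptraceB ((1 ⊗ₖ symProj (Fin dB)) * reindexAB (pure2 ψ))
      = Matrix.of fun x y => ∑ b, phiS ψ x b * conj (phiS ψ y b) := by
  ext x y
  rw [Matrix.of_apply, ← sum_phiS_conj_phi]
  -- same proof as the example above
  unfold ptraceB
  refine Finset.sum_congr rfl fun b _ => ?_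
  rw [Matrix.mul_apply, Fintype.sum_prod_type]
  simp only [Matrix.kroneckerMap_apply, Matrix.one_apply, ite_mul, one_mul, zero_mul,
    Finset.sum_ite_eq, Finset.mem_univ, if_true]
  rw [Finset.sum_comm]
  simp only [Finset.sum_ite_eq, Finset.mem_univ, if_true]
  have hcond : ∀ c : Fin dB × Fin dB, (b.1 = c.2 ∧ b.2 = c.1) ↔ c = (b.2, b.1) := by
    intro c
    constructor
    · rintro ⟨h1, h2⟩
      exact Prod.ext h2.symm h1.symm
    · rintro rfl
      exact ⟨rfl, rfl⟩
  simp only [symProj, Matrix.smul_apply, Matrix.add_apply, Matrix.one_apply, swapMat,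
    reindexAB_pure2_apply, smul_eq_mul, hcond, mul_add, add_mul, ite_mul, mul_ite, mul_zero,
    mul_one, zero_mul, one_mul, Finset.sum_add_distrib, Finset.sum_ite_eq, Finset.sum_ite_eq',
    Finset.mem_univ, if_true]
  simp only [phiS]
  ring

lemma sym_trace : (symProj (Fin dA)).trace = ((((dA : ℝ)^2 + dA) / 2 : ℝ) : ℂ) := by
  have hdiag : ∀ x : Fin dA × Fin dA, symProj (Fin dA) x x
      = (2⁻¹ : ℂ) * (1 + if x.1 = x.2 then 1 else 0) := by
    intro x
    by_cases h : x.1 = x.2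
    · simp [symProj, swapMat, Matrix.one_apply, h]
    · have h' : ¬ x.2 = x.1 := fun hh => h hh.symm
      simp [symProj, swapMat, Matrix.one_apply, h, h']
  calc (symProj (Fin dA)).trace
      = ∑ x : Fin dA × Fin dA, (2⁻¹ : ℂ) * (1 + if x.1 = x.2 then 1 else 0) :=
        Finset.sum_congr rfl fun x _ => hdiag x
    _ = (2⁻¹ : ℂ) * ((Fintype.card (Fin dA × Fin dA) : ℂ)
          + ∑ x : Fin dA × Fin dA, if x.1 = x.2 then (1:ℂ) else 0) := by
        rw [← Finset.mul_sum, Finset.sum_add_distrib]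
        simp [Finset.card_univ]
    _ = (2⁻¹ : ℂ) * ((dA * dA : ℕ) + (dA : ℂ)) := by
        congr 1
        rw [Fintype.sum_prod_type]
        simp [Finset.sum_ite_eq, Finset.card_univ]
    _ = ((((dA : ℝ)^2 + dA) / 2 : ℝ) : ℂ) := by
        push_cast
        ring

lemma phi_total (ψ : Fin dA × Fin dB → ℂ) (hψ : unitVec ψ) :
    ∑ x : Fin dA × Fin dA, ∑ b : Fin dB × Fin dB, phi ψ x b * conj (phi ψ x b) = 1 := by
  have fact : (∑ p : Fin dA × Fin dB, ψ p * conj (ψ p)) = 1 := by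
    simp only [Complex.mul_conj]
    exact_mod_cast hψ
  calc ∑ x : Fin dA × Fin dA, ∑ b : Fin dB × Fin dB, phi ψ x b * conj (phi ψ x b)
      = ∑ z : (Fin dA × Fin dA) × (Fin dB × Fin dB), phi ψ z.1 z.2 * conj (phi ψ z.1 z.2) := by
        rw [← Fintype.sum_prod_type']
    _ = ∑ r : (Fin dA × Fin dB) × (Fin dA × Fin dB),
          (ψ r.1 * conj (ψ r.1)) * (ψ r.2 * conj (ψ r.2)) := by
        refine (Fintype.sum_equiv (reorder (Fin dA) (Fin dB)) _ _ fun r => ?_).symm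
        simp only [reorder, phi, Equiv.coe_fn_mk, _root_.map_mul]
        ring
    _ = ∑ p : Fin dA × Fin dB, ∑ q : Fin dA × Fin dB,
          (ψ p * conj (ψ p)) * (ψ q * conj (ψ q)) := by
        rw [← Fintype.sum_prod_type']
    _ = (∑ p : Fin dA × Fin dB, ψ p * conj (ψ p)) * (∑ p : Fin dA × Fin dB, ψ p * conj (ψ p)) := by
        rw [Finset.sum_mul_sum]
    _ = 1 := by rw [fact, one_mul]

lemma total_sum (ψ : Fin dA × Fin dB → ℂ) (hψ : unitVec ψ) :
    (∑ x : Fin dA × Fin dA, ∑ b : Fin dB × Fin dB, phiS ψ x b * conj (phiS ψ x b))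
      + (∑ x : Fin dA × Fin dA, ∑ b : Fin dB × Fin dB, phiA ψ x b * conj (phiA ψ x b)) = 1 := by
  have pointwise : ∀ (x : Fin dA × Fin dA) (b : Fin dB × Fin dB),
      phiS ψ x b * conj (phiS ψ x b) + phiA ψ x b * conj (phiA ψ x b)
        = (phi ψ x b * conj (phi ψ x b) + phi ψ x (b.2, b.1) * conj (phi ψ x (b.2, b.1))) / 2 := by
    intro x b
    simp only [phiS, phiA, map_add, map_sub, map_div₀, map_ofNat]
    ring
  have swapsum : ∀ x : Fin dA × Fin dA,
      ∑ b : Fin dB × Fin dB, phi ψ x (b.2, b.1) * conj (phi ψ x (b.2, b.1))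
        = ∑ b : Fin dB × Fin dB, phi ψ x b * conj (phi ψ x b) :=
    fun x => sum_swap_reindex (fun b => phi ψ x b * conj (phi ψ x b))
  calc (∑ x : Fin dA × Fin dA, ∑ b : Fin dB × Fin dB, phiS ψ x b * conj (phiS ψ x b))
      + (∑ x : Fin dA × Fin dA, ∑ b : Fin dB × Fin dB, phiA ψ x b * conj (phiA ψ x b))
      = ∑ x : Fin dA × Fin dA, ∑ b : Fin dB × Fin dB,
          (phiS ψ x b * conj (phiS ψ x b) + phiA ψ x b * conj (phiA ψ x b)) := by
        rw [← Finset.sum_add_distrib]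
        exact Finset.sum_congr rfl fun x _ => by rw [← Finset.sum_add_distrib]
    _ = ∑ x : Fin dA × Fin dA, ∑ b : Fin dB × Fin dB, phi ψ x b * conj (phi ψ x b) := by
        refine Finset.sum_congr rfl fun x _ => ?_
        rw [Finset.sum_congr rfl fun b _ => pointwise x b]
        rw [show (∑ b : Fin dB × Fin dB,
            (phi ψ x b * conj (phi ψ x b) + phi ψ x (b.2, b.1) * conj (phi ψ x (b.2, b.1))) / 2)
          = ((∑ b : Fin dB × Fin dB, phi ψ x b * conj (phi ψ x b))
            + ∑ b : Fin dB × Fin dB, phi ψ x (b.2, b.1) * conj (phi ψ x (b.2, b.1))) / 2 from by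
          rw [← Finset.sum_add_distrib, Finset.sum_div]]
        rw [swapsum x]
        ring
    _ = 1 := phi_total ψ hψ


end Aux2

open scoped ComplexOrder in
theorem stmt_16 (dA dB : ℕ) (ψ : Fin dA × Fin dB → ℂ) (hψ : unitVec ψ) :
    (toyReduced ψ).trace = 1 ∧ (toyReduced ψ).PosSemidef := by
  have hdA : dA ≠ 0 := by
    intro h
    subst h
    rw [unitVec, Fintype.sum_prod_type] at hψ
    simp at hψ
  have hs0 : (0:ℝ) < ((dA : ℝ)^2 + dA) / 2 := by
    have h1 : (0:ℝ) < (dA : ℝ) := by exact_mod_cast Nat.pos_of_ne_zero hdA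
    positivity
  have hr0 : (0:ℝ) ≤ ∑ x : Fin dA × Fin dA, ∑ b : Fin dB × Fin dB,
      Complex.normSq (phiA ψ x b) :=
    Finset.sum_nonneg fun x _ => Finset.sum_nonneg fun b _ => Complex.normSq_nonneg _
  have hasym : ((asymProj (Fin dA) ⊗ₖ asymProj (Fin dB)) * reindexAB (pure2 ψ)).trace
      = ((∑ x : Fin dA × Fin dA, ∑ b : Fin dB × Fin dB, Complex.normSq (phiA ψ x b) : ℝ) : ℂ) := by
    rw [asym_trace]
    simp only [Complex.mul_conj]
    push_cast
    rfl
  have hcoeff : ((asymProj (Fin dA) ⊗ₖ asymProj (Fin dB)) * reindexAB (pure2 ψ)).trace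
        / (symProj (Fin dA)).trace
      = (((∑ x : Fin dA × Fin dA, ∑ b : Fin dB × Fin dB, Complex.normSq (phiA ψ x b))
          / (((dA : ℝ)^2 + dA) / 2) : ℝ) : ℂ) := by
    rw [hasym, sym_trace, ← Complex.ofReal_div]
  have hform : toyReduced ψ
      = Matrix.of (fun x y => ∑ b, phiS ψ x b * conj (phiS ψ y b))
        + (((∑ x : Fin dA × Fin dA, ∑ b : Fin dB × Fin dB, Complex.normSq (phiA ψ x b))
            / (((dA : ℝ)^2 + dA) / 2) : ℝ) : ℂ) • symProj (Fin dA) := by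
    rw [toyReduced, ptrace_eq, hcoeff]
  constructor
  · rw [hform, Matrix.trace_add, Matrix.trace_smul, sym_trace]
    have t1 : (Matrix.of fun x y => ∑ b, phiS ψ x b * conj (phiS ψ y b)).trace
        = ∑ x : Fin dA × Fin dA, ∑ b : Fin dB × Fin dB, phiS ψ x b * conj (phiS ψ x b) := rfl
    rw [t1, smul_eq_mul, ← Complex.ofReal_mul, div_mul_cancel₀ _ (ne_of_gt hs0)]
    have h2 : ((∑ x : Fin dA × Fin dA, ∑ b : Fin dB × Fin dB,
          Complex.normSq (phiA ψ x b) : ℝ) : ℂ)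
        = ∑ x : Fin dA × Fin dA, ∑ b : Fin dB × Fin dB, phiA ψ x b * conj (phiA ψ x b) := by
      simp only [Complex.mul_conj]
      push_cast
      rfl
    rw [h2]
    exact total_sum ψ hψ
  · rw [hform]
    exact (gram_posSemidef _).add
      (real_smul_posSemidef symProj_posSemidef (div_nonneg hr0 hs0.le))
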